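/- Let (X, ‖·‖ₙ) and (Y, |·|ₙ) be Fréchet spaces and F : X ⇉ Y a set-valued map with closed graph. Let U ⊆ X, V ⊆ Y be open with graph(F) ∩ (U × V) ≠ ∅. Assume that for some s ∈ ℝ₊^∞ and some nonempty set C ⊆ Y, D′F(x,y)(Πₛ(X)) ⊇ C for all (x,y) ∈ (U × V) ∩ graph(F). Then for every (x,y) ∈ graph(F) with x + Πₛ(X) ⊆ U and [y, y + C] ⊆ V, the closure of F(x + Πₛ(X)) contains y + C. -/

import Mathlib

open Filter Topology Set Pointwise

/-- The standard Fréchet metric built from a countable family of seminorms. -/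
noncomputable def frechetRho {X : Type*} [AddCommGroup X] [Module ℝ X]
    (p : ℕ → Seminorm ℝ X) (x y : X) : ℝ :=
  ⨆ n, (2 : ℝ)⁻¹ ^ n * p n (x - y) / (1 + p n (x - y))

/-- `Πₛ(X) = {x : ‖x‖ₙ ≤ sₙ for all n}`. -/
def PiS {X : Type*} [AddCommGroup X] [Module ℝ X] (p : ℕ → Seminorm ℝ X) (s : ℕ → ℝ) :
    Set X := {x | ∀ n, p n x ≤ s n}

/-- The contingent variation `D′F(x,y)(A)`: `v ∈ D′F(x,y)(A)` iff there are `tₖ ↓ 0`,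
`aₖ ∈ A` and `zₖ ∈ F(x + tₖ aₖ)` with `ρ_Y(zₖ, y + tₖ v)/tₖ → 0`. -/
def contVar {X Y : Type*} [AddCommGroup X] [Module ℝ X] [AddCommGroup Y] [Module ℝ Y]
    (q : ℕ → Seminorm ℝ Y) (F : X → Set Y) (x : X) (y : Y) (A : Set X) : Set Y :=
  {v | ∃ (t : ℕ → ℝ) (a : ℕ → X) (z : ℕ → Y),
    (∀ k, 0 < t k) ∧ Filter.Tendsto t Filter.atTop (nhds 0) ∧ (∀ k, a k ∈ A) ∧
    (∀ k, z k ∈ F (x + t k • a k)) ∧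
    Filter.Tendsto (fun k => frechetRho q (z k) (y + t k • v) / t k) Filter.atTop (nhds 0)}

/-- The `ρ`-closure of a set. -/
def rhoClosure {Y : Type*} [AddCommGroup Y] [Module ℝ Y] (q : ℕ → Seminorm ℝ Y)
    (A : Set Y) : Set Y := {y | ∀ ε > (0 : ℝ), ∃ a ∈ A, frechetRho q a y < ε}

/-- Openness with respect to the Fréchet metric `ρ`. -/
def RhoOpen {X : Type*} [AddCommGroup X] [Module ℝ X] (p : ℕ → Seminorm ℝ X)
    (U : Set X) : Prop := ∀ x ∈ U, ∃ ε > (0 : ℝ), ∀ x', frechetRho p x x' < ε → x' ∈ U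


section aux
variable {Y : Type*} [AddCommGroup Y] [Module ℝ Y] (q : ℕ → Seminorm ℝ Y)

private lemma phi_nonneg {a : ℝ} (ha : 0 ≤ a) : 0 ≤ a / (1 + a) :=
  div_nonneg ha (by linarith)

private lemma phi_le_one {a : ℝ} (ha : 0 ≤ a) : a / (1 + a) ≤ 1 := by
  rw [div_le_one (by linarith)]; linarith

private lemma phi_mono {a b : ℝ} (ha : 0 ≤ a) (h : a ≤ b) : a / (1 + a) ≤ b / (1 + b) := by
  have hb : 0 ≤ b := ha.trans h
  rw [div_le_div_iff₀ (by linarith) (by linarith)]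
  nlinarith

private lemma phi_lt_of_lt {a b : ℝ} (hb : 0 ≤ b) (h : a / (1 + a) < b / (1 + b)) (ha : 0 ≤ a) :
    a < b := by
  by_contra hc
  exact absurd (phi_mono hb (not_lt.mp hc)) (not_le.mpr h)

private lemma phi_add {a b : ℝ} (ha : 0 ≤ a) (hb : 0 ≤ b) :
    (a + b) / (1 + (a + b)) ≤ a / (1 + a) + b / (1 + b) := by
  rw [add_div]
  gcongr <;> linarith

lemma rho_term_nonneg (a b : Y) (n : ℕ) :
    0 ≤ (2:ℝ)⁻¹ ^ n * q n (a - b) / (1 + q n (a - b)) := by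
  have h := apply_nonneg (q n) (a - b)
  positivity

lemma rho_term_le_one (a b : Y) (n : ℕ) :
    (2:ℝ)⁻¹ ^ n * q n (a - b) / (1 + q n (a - b)) ≤ 1 := by
  have h := apply_nonneg (q n) (a - b)
  rw [mul_div_assoc]
  calc (2:ℝ)⁻¹ ^ n * (q n (a - b) / (1 + q n (a - b))) ≤ 1 * 1 := by
        apply mul_le_mul _ (phi_le_one h) (phi_nonneg h) zero_le_one
        exact pow_le_one₀ (by norm_num) (by norm_num)
    _ = 1 := one_mul 1

lemma rho_bddAbove (a b : Y) :
    BddAbove (Set.range fun n => (2:ℝ)⁻¹ ^ n * q n (a - b) / (1 + q n (a - b))) := by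
  refine ⟨1, ?_⟩
  rintro _ ⟨n, rfl⟩
  exact rho_term_le_one q a b n

lemma frechetRho_nonneg (a b : Y) : 0 ≤ frechetRho q a b :=
  Real.iSup_nonneg (rho_term_nonneg q a b)

lemma frechetRho_le (a b : Y) {B : ℝ}
    (h : ∀ n, (2:ℝ)⁻¹ ^ n * q n (a - b) / (1 + q n (a - b)) ≤ B) : frechetRho q a b ≤ B :=
  ciSup_le h

lemma le_frechetRho (a b : Y) (n : ℕ) :
    (2:ℝ)⁻¹ ^ n * q n (a - b) / (1 + q n (a - b)) ≤ frechetRho q a b :=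
  le_ciSup (rho_bddAbove q a b) n

lemma frechetRho_eq_of_sub_eq {a b a' b' : Y} (h : a - b = a' - b') :
    frechetRho q a b = frechetRho q a' b' := by
  unfold frechetRho; rw [h]

lemma frechetRho_symm (a b : Y) : frechetRho q a b = frechetRho q b a := by
  unfold frechetRho
  have : ∀ n, q n (a - b) = q n (b - a) := fun n => by
    rw [← neg_sub b a, map_neg_eq_map]
  simp_rw [this]

lemma frechetRho_self (a : Y) : frechetRho q a a = 0 := by
  unfold frechetRho
  simp [ciSup_const]

lemma frechetRho_triangle (a b c : Y) :
    frechetRho q a c ≤ frechetRho q a b + frechetRho q b c := by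
  apply frechetRho_le
  intro n
  have h1 : q n (a - c) ≤ q n (a - b) + q n (b - c) := by
    have := map_add_le_add (q n) (a - b) (b - c)
    rwa [sub_add_sub_cancel] at this
  have h2 : (2:ℝ)⁻¹ ^ n * q n (a - c) / (1 + q n (a - c))
      ≤ (2:ℝ)⁻¹ ^ n * q n (a - b) / (1 + q n (a - b))
        + (2:ℝ)⁻¹ ^ n * q n (b - c) / (1 + q n (b - c)) := by
    rw [mul_div_assoc, mul_div_assoc, mul_div_assoc, ← mul_add]
    apply mul_le_mul_of_nonneg_left _ (by positivity)
    calc q n (a - c) / (1 + q n (a - c))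
        ≤ (q n (a - b) + q n (b - c)) / (1 + (q n (a - b) + q n (b - c))) :=
          phi_mono (apply_nonneg _ _) h1
      _ ≤ _ := phi_add (apply_nonneg _ _) (apply_nonneg _ _)
  exact h2.trans (add_le_add (le_frechetRho q a b n) (le_frechetRho q b c n))

/-- uniform smallness: if all seminorms of the difference are `≤ δ * s' n` then `ρ < ε`. -/
lemma exists_rho_lt (s' : ℕ → ℝ) {ε : ℝ} (hε : 0 < ε) :
    ∃ δ > 0, ∀ a b : Y, (∀ n, q n (a - b) ≤ δ * s' n) → frechetRho q a b < ε := by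
  obtain ⟨N, hN⟩ : ∃ n : ℕ, (2:ℝ)⁻¹ ^ n < ε := exists_pow_lt_of_lt_one hε (by norm_num)
  set M : ℝ := 1 + ∑ n ∈ Finset.range N, |s' n| with hM
  have hMpos : 0 < M := by positivity
  have hM_ge : ∀ n < N, s' n ≤ M := by
    intro n hn
    have h1 : |s' n| ≤ ∑ m ∈ Finset.range N, |s' m| :=
      Finset.single_le_sum (fun m _ => abs_nonneg (s' m)) (Finset.mem_range.mpr hn)
    have := le_abs_self (s' n)
    simp only [hM]; linarith
  refine ⟨ε / (2 * M), by positivity, fun a b hab => ?_⟩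
  have key : frechetRho q a b ≤ max (ε / 2) ((2:ℝ)⁻¹ ^ N) := by
    apply frechetRho_le
    intro n
    rcases lt_or_ge n N with hn | hn
    · refine le_max_of_le_left ?_
      have hq : q n (a - b) ≤ ε / 2 := by
        calc q n (a - b) ≤ ε / (2 * M) * s' n := hab n
          _ ≤ ε / (2 * M) * M := by
              apply mul_le_mul_of_nonneg_left (hM_ge n hn) (by positivity)
          _ = ε / 2 := by field_simp
      calc (2:ℝ)⁻¹ ^ n * q n (a - b) / (1 + q n (a - b))
          ≤ 1 * q n (a - b) / (1 + q n (a - b)) := by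
            have h0 := apply_nonneg (q n) (a - b)
            have h1 : (2:ℝ)⁻¹ ^ n ≤ 1 := pow_le_one₀ (by norm_num) (by norm_num)
            gcongr
        _ = q n (a - b) / (1 + q n (a - b)) := by rw [one_mul]
        _ ≤ q n (a - b) := by
            have h0 := apply_nonneg (q n) (a - b)
            rw [div_le_iff₀ (by linarith)]
            nlinarith
        _ ≤ ε / 2 := hq
    · refine le_max_of_le_right ?_
      have h0 := apply_nonneg (q n) (a - b)
      calc (2:ℝ)⁻¹ ^ n * q n (a - b) / (1 + q n (a - b))
          ≤ (2:ℝ)⁻¹ ^ n * 1 := by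
            rw [mul_div_assoc]
            exact mul_le_mul_of_nonneg_left (phi_le_one h0) (by positivity)
        _ = (2:ℝ)⁻¹ ^ n := mul_one _
        _ ≤ (2:ℝ)⁻¹ ^ N := pow_le_pow_of_le_one (by norm_num) (by norm_num) hn
  exact key.trans_lt (max_lt (by linarith) hN)

lemma seminorm_lt_of_rho_lt {a b : Y} (n : ℕ) {e : ℝ} (he : 0 < e)
    (h : frechetRho q a b < (2:ℝ)⁻¹ ^ n * (e / (1 + e))) : q n (a - b) < e := by
  have h1 := le_frechetRho q a b n
  have h2 : (2:ℝ)⁻¹ ^ n * (q n (a - b) / (1 + q n (a - b))) < (2:ℝ)⁻¹ ^ n * (e / (1 + e)) := by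
    rw [← mul_div_assoc]; exact h1.trans_lt h
  have h3 : q n (a - b) / (1 + q n (a - b)) < e / (1 + e) :=
    lt_of_mul_lt_mul_left h2 (by positivity)
  exact phi_lt_of_lt he.le h3 (apply_nonneg _ _)

lemma tendsto_seminorm_of_tendsto_rho {w : ℕ → Y} {z : Y}
    (h : Tendsto (fun k => frechetRho q (w k) z) atTop (𝓝 0)) (n : ℕ) :
    Tendsto (fun k => q n (w k - z)) atTop (𝓝 0) := by
  rw [Metric.tendsto_atTop]
  intro e he
  have hpos : (0:ℝ) < (2:ℝ)⁻¹ ^ n * (e / (1 + e)) := by positivity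
  obtain ⟨N, hN⟩ := (Metric.tendsto_atTop.mp h) _ hpos
  refine ⟨N, fun k hk => ?_⟩
  have := hN k hk
  rw [Real.dist_eq, sub_zero, abs_of_nonneg (frechetRho_nonneg q _ _)] at this
  rw [Real.dist_eq, sub_zero, abs_of_nonneg (apply_nonneg _ _)]
  exact seminorm_lt_of_rho_lt q n he this

lemma tendsto_rho_smul {t : ℕ → ℝ} {t0 : ℝ} (w c : Y) (ht : Tendsto t atTop (𝓝 t0)) :
    Tendsto (fun k => frechetRho q (w + t k • c) (w + t0 • c)) atTop (𝓝 0) := by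
  rw [Metric.tendsto_atTop]
  intro e he
  obtain ⟨δ, hδ, hP⟩ := exists_rho_lt q (fun n => q n c) he
  obtain ⟨N, hN⟩ := (Metric.tendsto_atTop.mp ht) δ hδ
  refine ⟨N, fun k hk => ?_⟩
  have hd : |t k - t0| ≤ δ := by
    have := hN k hk; rw [Real.dist_eq] at this; linarith
  have hrho : frechetRho q (w + t k • c) (w + t0 • c) < e := by
    apply hP
    intro n
    have : (w + t k • c) - (w + t0 • c) = (t k - t0) • c := by
      rw [sub_smul]; abel
    rw [this, map_smul_eq_mul]
    exact mul_le_mul_of_nonneg_right hd (apply_nonneg _ _)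
  rw [Real.dist_eq, sub_zero, abs_of_nonneg (frechetRho_nonneg q _ _)]
  exact hrho

end aux

section zornAux
variable {X Y : Type*} [AddCommGroup X] [Module ℝ X] [AddCommGroup Y] [Module ℝ Y]

/-- The invariant carried along the Zorn construction. -/
def stmtInv (p : ℕ → Seminorm ℝ X) (q : ℕ → Seminorm ℝ Y) (F : X → Set Y) (s : ℕ → ℝ)
    (x : X) (y c : Y) (η : ℝ) (w : ℝ × X × Y) : Prop :=
  w.1 ∈ Set.Icc (0:ℝ) 1 ∧ (∀ n, p n w.2.1 ≤ w.1 * s n) ∧ w.2.2 ∈ F (x + w.2.1) ∧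
    frechetRho q w.2.2 (y + w.1 • c) ≤ η * w.1

/-- The partial order used for Zorn's lemma. -/
def stmtRel (p : ℕ → Seminorm ℝ X) (q : ℕ → Seminorm ℝ Y) (s : ℕ → ℝ) (c : Y) (η : ℝ)
    (a b : ℝ × X × Y) : Prop :=
  a.1 ≤ b.1 ∧ (∀ n, p n (b.2.1 - a.2.1) ≤ (b.1 - a.1) * s n) ∧
    frechetRho q b.2.2 (a.2.2 + (b.1 - a.1) • c) ≤ η * (b.1 - a.1)

variable (p : ℕ → Seminorm ℝ X) (q : ℕ → Seminorm ℝ Y) (s : ℕ → ℝ) (c : Y) (η : ℝ)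

lemma stmtRel_refl (a : ℝ × X × Y) : stmtRel p q s c η a a := by
  refine ⟨le_refl _, fun n => ?_, ?_⟩
  · rw [sub_self, sub_self, map_zero, zero_mul]
  · rw [sub_self, zero_smul, add_zero, frechetRho_self, mul_zero]

lemma stmtRel_trans {a b d : ℝ × X × Y} (hab : stmtRel p q s c η a b)
    (hbd : stmtRel p q s c η b d) : stmtRel p q s c η a d := by
  obtain ⟨h1, h2, h3⟩ := hab; obtain ⟨h4, h5, h6⟩ := hbd
  refine ⟨h1.trans h4, fun n => ?_, ?_⟩
  · have hadd := map_add_le_add (p n) (d.2.1 - b.2.1) (b.2.1 - a.2.1)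
    rw [sub_add_sub_cancel] at hadd
    calc p n (d.2.1 - a.2.1) ≤ (d.1 - b.1) * s n + (b.1 - a.1) * s n :=
          hadd.trans (add_le_add (h5 n) (h2 n))
      _ = (d.1 - a.1) * s n := by ring
  · have htri := frechetRho_triangle q d.2.2 (b.2.2 + (d.1 - b.1) • c)
      (a.2.2 + (d.1 - a.1) • c)
    have heq : frechetRho q (b.2.2 + (d.1 - b.1) • c) (a.2.2 + (d.1 - a.1) • c)
        = frechetRho q b.2.2 (a.2.2 + (b.1 - a.1) • c) :=
      frechetRho_eq_of_sub_eq q (by module)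
    rw [heq] at htri
    calc frechetRho q d.2.2 (a.2.2 + (d.1 - a.1) • c)
        ≤ _ + _ := htri
      _ ≤ η * (d.1 - b.1) + η * (b.1 - a.1) := add_le_add h6 h3
      _ = η * (d.1 - a.1) := by ring

lemma stmtRel_flip {a b : ℝ × X × Y} (h : stmtRel p q s c η a b) (heq : a.1 = b.1) :
    stmtRel p q s c η b a := by
  obtain ⟨h1, h2, h3⟩ := h
  have e1 : a.1 - b.1 = 0 := by rw [heq, sub_self]
  have e2 : b.1 - a.1 = 0 := by rw [heq, sub_self]
  refine ⟨heq.ge, fun n => ?_, ?_⟩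
  · rw [e1, zero_mul]
    have h2' := h2 n; rw [e2, zero_mul] at h2'
    calc p n (a.2.1 - b.2.1) = p n (b.2.1 - a.2.1) := by rw [← neg_sub, map_neg_eq_map]
      _ ≤ 0 := h2'
  · rw [e1, zero_smul, add_zero, mul_zero, frechetRho_symm]
    have h3' := h3; rw [e2, zero_smul, add_zero, mul_zero] at h3'
    exact h3'

end zornAux

/-- cornerstone theorem: if `D′F(x,y)(Πₛ(X)) ⊇ C` on
`(U × V) ∩ graph F`, then `cl F(x + Πₛ(X)) ⊇ y + C` whenever `(x,y) ∈ graph F`,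
`x + Πₛ(X) ⊆ U` and `[y, y + C] ⊆ V`. -/
theorem stmt11 {X Y : Type*} [AddCommGroup X] [Module ℝ X] [AddCommGroup Y] [Module ℝ Y]
    (p : ℕ → Seminorm ℝ X) (q : ℕ → Seminorm ℝ Y)
    (hsepX : ∀ x : X, (∀ n, p n x = 0) → x = 0)
    (hsepY : ∀ y : Y, (∀ n, q n y = 0) → y = 0)
    (hcompX : ∀ u : ℕ → X,
      (∀ ε > (0 : ℝ), ∃ N, ∀ m ≥ N, ∀ k ≥ N, frechetRho p (u m) (u k) < ε) →
      ∃ x : X, Tendsto (fun k => frechetRho p (u k) x) atTop (𝓝 0))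
    (hcompY : ∀ u : ℕ → Y,
      (∀ ε > (0 : ℝ), ∃ N, ∀ m ≥ N, ∀ k ≥ N, frechetRho q (u m) (u k) < ε) →
      ∃ y : Y, Tendsto (fun k => frechetRho q (u k) y) atTop (𝓝 0))
    (F : X → Set Y)
    (hgraph : ∀ (u : ℕ → X) (w : ℕ → Y) (x : X) (y : Y), (∀ k, w k ∈ F (u k)) →
      Tendsto (fun k => frechetRho p (u k) x) atTop (𝓝 0) →
      Tendsto (fun k => frechetRho q (w k) y) atTop (𝓝 0) → y ∈ F x)
    (U : Set X) (V : Set Y) (hU : RhoOpen p U) (hV : RhoOpen q V)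
    (hne : ∃ x y, y ∈ F x ∧ x ∈ U ∧ y ∈ V)
    (s : ℕ → ℝ) (hs : ∀ n, 0 ≤ s n)
    (C : Set Y) (hC : C.Nonempty)
    (hD : ∀ x y, y ∈ F x → x ∈ U → y ∈ V → C ⊆ contVar q F x y (PiS p s)) :
    ∀ x y, y ∈ F x → (∀ u ∈ PiS p s, x + u ∈ U) →
      (∀ c ∈ C, ∀ t ∈ Set.Icc (0 : ℝ) 1, y + t • c ∈ V) →
      ∀ c ∈ C, y + c ∈ rhoClosure q (⋃ u ∈ PiS p s, F (x + u)) := by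
  intro x y hxy hxU hyV c hc
  intro ε hε
  -- Step A: uniform margin δ0 around the segment [y, y+c] inside V
  have hseg2 : ∀ t ∈ Icc (0:ℝ) 1, ∃ e > 0, ∀ w, frechetRho q w (y + t • c) < e → w ∈ V := by
    intro t ht
    obtain ⟨e, he, hb⟩ := hV (y + t • c) (hyV c hc t ht)
    exact ⟨e, he, fun w hw => hb w (by rwa [frechetRho_symm] at hw)⟩
  choose! e he hball using hseg2
  have hcont : ∀ t ∈ Icc (0:ℝ) 1, ∃ d > 0, ∀ t' : ℝ, |t' - t| ≤ d →
      frechetRho q (y + t' • c) (y + t • c) < e t / 2 := by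
    intro t ht
    obtain ⟨d, hd, hP⟩ := exists_rho_lt q (fun n => q n c) (half_pos (he t ht))
    refine ⟨d, hd, fun t' h' => hP _ _ fun n => ?_⟩
    have hsub : (y + t' • c) - (y + t • c) = (t' - t) • c := by rw [sub_smul]; abel
    rw [hsub, map_smul_eq_mul]
    exact mul_le_mul_of_nonneg_right h' (apply_nonneg _ _)
  choose! d hd hdP using hcont
  obtain ⟨sf, hsf⟩ := isCompact_Icc.elim_finite_subcover
    (fun i : Icc (0:ℝ) 1 => Ioo (i.1 - d i.1) (i.1 + d i.1)) (fun i => isOpen_Ioo)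
    (fun t ht => mem_iUnion.mpr ⟨⟨t, ht⟩, by
      have := hd t ht
      exact mem_Ioo.mpr ⟨by linarith, by linarith⟩⟩)
  have hsfne : sf.Nonempty := by
    have h0 : (0:ℝ) ∈ ⋃ i ∈ sf, Ioo (i.1 - d i.1) (i.1 + d i.1) :=
      hsf (mem_Icc.mpr ⟨le_refl 0, zero_le_one⟩)
    simp only [mem_iUnion] at h0
    obtain ⟨i, hi, _⟩ := h0
    exact ⟨i, hi⟩
  set δ0 : ℝ := sf.inf' hsfne (fun i => e i.1 / 2) with hδ0def
  have hδ0pos : 0 < δ0 := by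
    rw [hδ0def, Finset.lt_inf'_iff]
    exact fun i _ => half_pos (he i.1 i.2)
  have hmar : ∀ t ∈ Icc (0:ℝ) 1, ∀ w, frechetRho q w (y + t • c) < δ0 → w ∈ V := by
    intro t ht w hw
    have h1 : t ∈ ⋃ i ∈ sf, Ioo (i.1 - d i.1) (i.1 + d i.1) := hsf ht
    simp only [mem_iUnion] at h1
    obtain ⟨i, hisf, hti⟩ := h1
    rw [mem_Ioo] at hti
    have h2 : |t - i.1| ≤ d i.1 := by rw [abs_le]; constructor <;> linarith [hti.1, hti.2]
    have h3 : frechetRho q (y + t • c) (y + i.1 • c) < e i.1 / 2 := hdP i.1 i.2 t h2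
    have h5 : δ0 ≤ e i.1 / 2 := Finset.inf'_le _ hisf
    have htr := frechetRho_triangle q w (y + t • c) (y + i.1 • c)
    exact hball i.1 i.2 w (by linarith)
  -- Step A': the error tolerance η
  set η : ℝ := min δ0 ε / 2 with hηdef
  have hmin : 0 < min δ0 ε := lt_min hδ0pos hε
  have hη : 0 < η := by rw [hηdef]; linarith
  have hηδ : η < δ0 := by
    rw [hηdef]; have := min_le_left δ0 ε; linarith
  have hηε : η < ε := by
    rw [hηdef]; have := min_le_right δ0 ε; linarith
  -- Step B: Zorn's lemma
  have hchains : ∀ cs : Set {w : ℝ × X × Y // stmtInv p q F s x y c η w},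
      IsChain (fun a b => stmtRel p q s c η a.1 b.1) cs →
      ∃ ub : {w : ℝ × X × Y // stmtInv p q F s x y c η w}, ∀ a ∈ cs, stmtRel p q s c η a.1 ub.1 := by
    intro cs hch
    by_cases hcs : cs.Nonempty
    · obtain ⟨a₀, ha₀⟩ := hcs
      have Tbdd : BddAbove ((fun a : {w : ℝ × X × Y // stmtInv p q F s x y c η w} => a.1.1) '' cs) :=
        ⟨1, by rintro _ ⟨a, ha, rfl⟩; exact a.2.1.2⟩
      have Tne : ((fun a : {w : ℝ × X × Y // stmtInv p q F s x y c η w} => a.1.1) '' cs).Nonempty :=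
        ⟨_, a₀, ha₀, rfl⟩
      set t0 : ℝ := sSup ((fun a : {w : ℝ × X × Y // stmtInv p q F s x y c η w} => a.1.1) '' cs)
        with ht0def
      have hle : ∀ a ∈ cs, a.1.1 ≤ t0 := fun a ha => le_csSup Tbdd ⟨a, ha, rfl⟩
      have h0t : 0 ≤ t0 := (a₀.2.1.1).trans (hle a₀ ha₀)
      have ht1 : t0 ≤ 1 := csSup_le Tne (by rintro _ ⟨a, ha, rfl⟩; exact a.2.1.2)
      by_cases hatt : ∃ a ∈ cs, a.1.1 = t0
      · obtain ⟨a0, ha0, hta0⟩ := hatt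
        refine ⟨a0, fun a ha => ?_⟩
        rcases eq_or_ne a a0 with rfl | hne
        · exact stmtRel_refl p q s c η a.1
        rcases hch ha ha0 hne with h | h
        · exact h
        · exact stmtRel_flip p q s c η h (le_antisymm h.1 (hta0 ▸ hle a ha))
      · -- supremum not attained: take a limit along a sequence
        have hlt : ∀ a ∈ cs, a.1.1 < t0 :=
          fun a ha => lt_of_le_of_ne (hle a ha) (fun h => hatt ⟨a, ha, h⟩)
        have hsel : ∀ k : ℕ, ∃ a, a ∈ cs ∧ t0 - 1/(k+1) < a.1.1 := by
          intro k
          have hpos : (0:ℝ) < 1/(k+1) := by positivity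
          obtain ⟨_, ⟨a, ha, rfl⟩, h⟩ := exists_lt_of_lt_csSup Tne
            (show t0 - 1/(k+1) < t0 by linarith)
          exact ⟨a, ha, h⟩
        choose g hgc hgt using hsel
        have hg1 : ∀ k : ℕ, (g k).1.1 < t0 := fun k => hlt _ (hgc k)
        have htt : Tendsto (fun k => (g k).1.1) atTop (𝓝 t0) := by
          apply tendsto_of_tendsto_of_tendsto_of_le_of_le
            (g := fun k : ℕ => t0 - 1/(k+1)) (h := fun _ : ℕ => t0)
          · simpa using (tendsto_const_nhds (x := t0)).sub (tendsto_one_div_add_atTop_nhds_zero_nat : Tendsto (fun n : ℕ => 1 / ((n : ℝ) + 1)) atTop (𝓝 0))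
          · exact tendsto_const_nhds
          · exact fun k => (hgt k).le
          · exact fun k => (hg1 k).le
        have hcomp2 : ∀ j k, (g j).1.1 ≤ (g k).1.1 → stmtRel p q s c η (g j).1 (g k).1 := by
          intro j k hjk
          rcases eq_or_ne (g j) (g k) with heq | hne
          · rw [heq]; exact stmtRel_refl p q s c η (g k).1
          rcases hch (hgc j) (hgc k) hne with h | h
          · exact h
          · exact stmtRel_flip p q s c η h (le_antisymm h.1 hjk)
        have hgap : ∀ N : ℕ, ∀ m ≥ N, ∀ k ≥ N, |(g m).1.1 - (g k).1.1| < 1/(N+1) := by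
          intro N m hm k hk
          have h1 : ∀ j ≥ N, t0 - 1/(N+1) < (g j).1.1 := by
            intro j hj
            have hj1 : (1:ℝ)/(j+1) ≤ 1/(N+1) := by
              apply one_div_le_one_div_of_le (by positivity)
              have : (N:ℝ) ≤ j := by exact_mod_cast hj
              linarith
            linarith [hgt j]
          have hm1 := h1 m hm; have hk1 := h1 k hk
          rw [abs_sub_lt_iff]
          constructor <;> linarith [hg1 m, hg1 k]
        have hpu : ∀ m k n, p n ((g m).1.2.1 - (g k).1.2.1) ≤ |(g m).1.1 - (g k).1.1| * s n := by
          intro m k n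
          rcases le_total (g k).1.1 (g m).1.1 with h | h
          · calc p n ((g m).1.2.1 - (g k).1.2.1) ≤ ((g m).1.1 - (g k).1.1) * s n :=
                  (hcomp2 k m h).2.1 n
              _ ≤ |(g m).1.1 - (g k).1.1| * s n :=
                  mul_le_mul_of_nonneg_right (le_abs_self _) (hs n)
          · have heq : p n ((g m).1.2.1 - (g k).1.2.1) = p n ((g k).1.2.1 - (g m).1.2.1) := by
              rw [← neg_sub, map_neg_eq_map]
            rw [heq, abs_sub_comm]
            calc p n ((g k).1.2.1 - (g m).1.2.1) ≤ ((g k).1.1 - (g m).1.1) * s n :=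
                (hcomp2 m k h).2.1 n
              _ ≤ |(g k).1.1 - (g m).1.1| * s n :=
                  mul_le_mul_of_nonneg_right (le_abs_self _) (hs n)
        -- the u-components form a Cauchy sequence
        have hCu : ∀ ε' > (0:ℝ), ∃ N, ∀ m ≥ N, ∀ k ≥ N,
            frechetRho p ((g m).1.2.1) ((g k).1.2.1) < ε' := by
          intro ε' hε'
          obtain ⟨δ, hδ, hP⟩ := exists_rho_lt p s hε'
          obtain ⟨N, hN⟩ := exists_nat_one_div_lt hδ
          refine ⟨N, fun m hm k hk => hP _ _ fun n => ?_⟩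
          calc p n ((g m).1.2.1 - (g k).1.2.1) ≤ |(g m).1.1 - (g k).1.1| * s n := hpu m k n
            _ ≤ δ * s n := mul_le_mul_of_nonneg_right
                (le_of_lt ((hgap N m hm k hk).trans hN)) (hs n)
        obtain ⟨uInf, huInf⟩ := hcompX (fun k => (g k).1.2.1) hCu
        -- the z-components form a Cauchy sequence
        have hCz : ∀ ε' > (0:ℝ), ∃ N, ∀ m ≥ N, ∀ k ≥ N,
            frechetRho q ((g m).1.2.2) ((g k).1.2.2) < ε' := by
          intro ε' hε'
          obtain ⟨δ, hδ, hP⟩ := exists_rho_lt q (fun n => q n c) (half_pos hε')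
          have hη2 : (0:ℝ) < ε' / (2 * (η + 1)) := by positivity
          obtain ⟨N1, hN1⟩ := exists_nat_one_div_lt hδ
          obtain ⟨N2, hN2⟩ := exists_nat_one_div_lt hη2
          refine ⟨max N1 N2, fun m hm k hk => ?_⟩
          have hm1 : m ≥ N1 := le_trans (le_max_left _ _) hm
          have hm2 : m ≥ N2 := le_trans (le_max_right _ _) hm
          have hk1 : k ≥ N1 := le_trans (le_max_left _ _) hk
          have hk2 : k ≥ N2 := le_trans (le_max_right _ _) hk
          have hd1 : |(g m).1.1 - (g k).1.1| < δ := (hgap N1 m hm1 k hk1).trans hN1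
          have hd2 : |(g m).1.1 - (g k).1.1| < ε' / (2 * (η + 1)) :=
            (hgap N2 m hm2 k hk2).trans hN2
          -- core bound for the ordered case
          have hcore : ∀ m' k', (g k').1.1 ≤ (g m').1.1 → |(g m').1.1 - (g k').1.1| < δ →
              |(g m').1.1 - (g k').1.1| < ε' / (2 * (η + 1)) →
              frechetRho q ((g m').1.2.2) ((g k').1.2.2) < ε' := by
            intro m' k' hord hδ' hη'
            have habs : |(g m').1.1 - (g k').1.1| = (g m').1.1 - (g k').1.1 :=
              abs_of_nonneg (by linarith)
            have h1 := (hcomp2 k' m' hord).2.2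
            have h2 : frechetRho q ((g k').1.2.2 + ((g m').1.1 - (g k').1.1) • c)
                ((g k').1.2.2) < ε' / 2 := by
              apply hP
              intro n
              have hsub : ((g k').1.2.2 + ((g m').1.1 - (g k').1.1) • c) - (g k').1.2.2
                  = ((g m').1.1 - (g k').1.1) • c := by abel
              rw [hsub, map_smul_eq_mul]
              exact mul_le_mul_of_nonneg_right hδ'.le (apply_nonneg _ _)
            have htr := frechetRho_triangle q ((g m').1.2.2)
              ((g k').1.2.2 + ((g m').1.1 - (g k').1.1) • c) ((g k').1.2.2)
            have hηd : η * ((g m').1.1 - (g k').1.1) < ε' / 2 := by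
              rw [habs] at hη'
              have hstep : η * (ε' / (2 * (η + 1))) ≤ ε' / 2 := by
                rw [← mul_div_assoc, div_le_div_iff₀ (by positivity) (by norm_num)]
                nlinarith [hη.le, hε']
              exact lt_of_lt_of_le (mul_lt_mul_of_pos_left hη' hη) hstep
            linarith
          rcases le_total (g k).1.1 (g m).1.1 with h | h
          · exact hcore m k h hd1 hd2
          · rw [frechetRho_symm]
            rw [abs_sub_comm] at hd1 hd2
            exact hcore k m h hd1 hd2
        obtain ⟨zInf, hzInf⟩ := hcompY (fun k => (g k).1.2.2) hCz
        have hun : ∀ n, Tendsto (fun k => p n ((g k).1.2.1 - uInf)) atTop (𝓝 0) :=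
          fun n => tendsto_seminorm_of_tendsto_rho p huInf n
        have hun' : ∀ n, Tendsto (fun k => p n (uInf - (g k).1.2.1)) atTop (𝓝 0) := by
          intro n
          refine (hun n).congr fun k => ?_
          rw [← neg_sub, map_neg_eq_map]
        -- the limit satisfies the invariant
        have hInv : stmtInv p q F s x y c η (t0, uInf, zInf) := by
          refine ⟨⟨h0t, ht1⟩, fun n => ?_, ?_, ?_⟩
          · have hb : ∀ k, p n uInf ≤ p n (uInf - (g k).1.2.1) + (g k).1.1 * s n := by
              intro k
              have h1 : p n uInf = p n ((uInf - (g k).1.2.1) + (g k).1.2.1) := by rw [sub_add_cancel]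
              have h2 := map_add_le_add (p n) (uInf - (g k).1.2.1) ((g k).1.2.1)
              have h3 := (g k).2.2.1 n
              linarith [h1 ▸ h2]
            have hbt : Tendsto (fun k => p n (uInf - (g k).1.2.1) + (g k).1.1 * s n) atTop
                (𝓝 (0 + t0 * s n)) := (hun' n).add (htt.mul_const _)
            have := ge_of_tendsto hbt (Eventually.of_forall hb)
            linarith
          · apply hgraph (fun k => x + (g k).1.2.1) (fun k => (g k).1.2.2) _ _
              (fun k => (g k).2.2.2.1)
            · refine huInf.congr fun k => ?_
              exact (frechetRho_eq_of_sub_eq p (add_sub_add_left_eq_sub _ _ _)).symm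
            · exact hzInf
          · have hb : ∀ k, frechetRho q zInf (y + t0 • c) ≤
                frechetRho q ((g k).1.2.2) zInf + η * (g k).1.1 +
                  frechetRho q (y + (g k).1.1 • c) (y + t0 • c) := by
              intro k
              have h1 := frechetRho_triangle q zInf ((g k).1.2.2) (y + t0 • c)
              have h2 := frechetRho_triangle q ((g k).1.2.2) (y + (g k).1.1 • c) (y + t0 • c)
              have h3 := (g k).2.2.2.2
              have h4 := frechetRho_symm q zInf ((g k).1.2.2)
              linarith
            have hbt : Tendsto (fun k => frechetRho q ((g k).1.2.2) zInf + η * (g k).1.1 +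
                frechetRho q (y + (g k).1.1 • c) (y + t0 • c)) atTop
                (𝓝 (0 + η * t0 + 0)) :=
              (hzInf.add (htt.const_mul η)).add (tendsto_rho_smul q y c htt)
            have := ge_of_tendsto hbt (Eventually.of_forall hb)
            linarith
        refine ⟨⟨(t0, uInf, zInf), hInv⟩, fun a ha => ?_⟩
        have halt : a.1.1 < t0 := hlt a ha
        have hev : ∀ᶠ k in atTop, stmtRel p q s c η a.1 (g k).1 := by
          filter_upwards [htt.eventually_const_lt halt] with k hk
          rcases eq_or_ne a (g k) with heq | hne
          · exact absurd (heq ▸ hk) (lt_irrefl _)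
          rcases hch ha (hgc k) hne with h | h
          · exact h
          · exact absurd h.1 (not_le.mpr hk)
        refine ⟨halt.le, fun n => ?_, ?_⟩
        · have hb : ∀ᶠ k in atTop, p n (uInf - a.1.2.1) ≤
              p n (uInf - (g k).1.2.1) + ((g k).1.1 - a.1.1) * s n := by
            filter_upwards [hev] with k hk
            have h1 : p n (uInf - a.1.2.1)
                = p n ((uInf - (g k).1.2.1) + ((g k).1.2.1 - a.1.2.1)) := by
              rw [sub_add_sub_cancel]
            have h2 := map_add_le_add (p n) (uInf - (g k).1.2.1) ((g k).1.2.1 - a.1.2.1)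
            have h3 := hk.2.1 n
            linarith [h1 ▸ h2]
          have hbt : Tendsto (fun k => p n (uInf - (g k).1.2.1) + ((g k).1.1 - a.1.1) * s n)
              atTop (𝓝 (0 + (t0 - a.1.1) * s n)) :=
            (hun' n).add ((htt.sub_const _).mul_const _)
          have := ge_of_tendsto hbt hb
          linarith
        · have hb : ∀ᶠ k in atTop, frechetRho q zInf (a.1.2.2 + (t0 - a.1.1) • c) ≤
              frechetRho q ((g k).1.2.2) zInf + η * ((g k).1.1 - a.1.1) +
                frechetRho q (a.1.2.2 + ((g k).1.1 - a.1.1) • c)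
                  (a.1.2.2 + (t0 - a.1.1) • c) := by
            filter_upwards [hev] with k hk
            have h1 := frechetRho_triangle q zInf ((g k).1.2.2) (a.1.2.2 + (t0 - a.1.1) • c)
            have h2 := frechetRho_triangle q ((g k).1.2.2)
              (a.1.2.2 + ((g k).1.1 - a.1.1) • c) (a.1.2.2 + (t0 - a.1.1) • c)
            have h3 := hk.2.2
            have h4 := frechetRho_symm q zInf ((g k).1.2.2)
            linarith
          have hbt : Tendsto (fun k => frechetRho q ((g k).1.2.2) zInf +
              η * ((g k).1.1 - a.1.1) +
              frechetRho q (a.1.2.2 + ((g k).1.1 - a.1.1) • c) (a.1.2.2 + (t0 - a.1.1) • c))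
              atTop (𝓝 (0 + η * (t0 - a.1.1) + 0)) :=
            (hzInf.add ((htt.sub_const _).const_mul η)).add
              (tendsto_rho_smul q a.1.2.2 c (htt.sub_const a.1.1))
          have := ge_of_tendsto hbt hb
          linarith
    · -- empty chain: use the base point (0, 0, y)
      refine ⟨⟨(0, 0, y), ?_, fun n => ?_, ?_, ?_⟩, fun a ha => absurd ⟨a, ha⟩ hcs⟩
      · exact ⟨le_refl 0, zero_le_one⟩
      · simp
      · simpa using hxy
      · simp [frechetRho_self]
  obtain ⟨m, hm⟩ := exists_maximal_of_chains_bounded hchains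
    (fun {a b d} hab hbd => stmtRel_trans p q s c η hab hbd)
  -- Step C: the maximal element must reach t = 1
  have hmt1 : m.1.1 = 1 := by
    refine le_antisymm m.2.1.2 ?_
    by_contra hlt1
    push_neg at hlt1
    -- at the maximal element we can still make a step, contradiction
    have hPiS : m.1.2.1 ∈ PiS p s := by
      intro n
      exact (m.2.2.1 n).trans (mul_le_of_le_one_left (hs n) m.2.1.2)
    have hmV : m.1.2.2 ∈ V := by
      apply hmar m.1.1 m.2.1
      have h1 : frechetRho q m.1.2.2 (y + m.1.1 • c) ≤ η * m.1.1 := m.2.2.2.2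
      have h2 : η * m.1.1 ≤ η := mul_le_of_le_one_right hη.le m.2.1.2
      linarith
    have hcv : c ∈ contVar q F (x + m.1.2.1) m.1.2.2 (PiS p s) :=
      hD (x + m.1.2.1) m.1.2.2 m.2.2.2.1 (hxU _ hPiS) hmV hc
    obtain ⟨tt, aa, zz, htpos, ht0, haP, hzF, hconv⟩ := hcv
    have e1 : ∀ᶠ k in atTop, tt k < 1 - m.1.1 :=
      ht0.eventually_lt_const (by linarith)
    have e2 : ∀ᶠ k in atTop,
        frechetRho q (zz k) (m.1.2.2 + tt k • c) / tt k < η :=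
      hconv.eventually_lt_const hη
    obtain ⟨k, hk1, hk2⟩ := (e1.and e2).exists
    have hzk : frechetRho q (zz k) (m.1.2.2 + tt k • c) < η * tt k := by
      rw [div_lt_iff₀ (htpos k)] at hk2
      linarith [hk2]
    have binv : stmtInv p q F s x y c η
        (m.1.1 + tt k, m.1.2.1 + tt k • aa k, zz k) := by
      refine ⟨⟨?_, ?_⟩, fun n => ?_, ?_, ?_⟩
      · show (0:ℝ) ≤ m.1.1 + tt k
        linarith [m.2.1.1, htpos k]
      · show m.1.1 + tt k ≤ 1
        linarith
      · show p n (m.1.2.1 + tt k • aa k) ≤ (m.1.1 + tt k) * s n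
        have h1 := map_add_le_add (p n) m.1.2.1 (tt k • aa k)
        have h2 : p n (tt k • aa k) = |tt k| * p n (aa k) := by
          rw [map_smul_eq_mul]; rfl
        have h3 : |tt k| = tt k := abs_of_pos (htpos k)
        have h4 : tt k * p n (aa k) ≤ tt k * s n :=
          mul_le_mul_of_nonneg_left (haP k n) (htpos k).le
        have h5 := m.2.2.1 n
        have h6 : (m.1.1 + tt k) * s n = m.1.1 * s n + tt k * s n := by ring
        rw [h3] at h2
        linarith [h1, h2 ▸ h1]
      · have := hzF k
        rwa [add_assoc] at this
      · show frechetRho q (zz k) (y + (m.1.1 + tt k) • c) ≤ η * (m.1.1 + tt k)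
        have htri := frechetRho_triangle q (zz k) (m.1.2.2 + tt k • c)
          (y + (m.1.1 + tt k) • c)
        have heq : frechetRho q (m.1.2.2 + tt k • c) (y + (m.1.1 + tt k) • c)
            = frechetRho q m.1.2.2 (y + m.1.1 • c) :=
          frechetRho_eq_of_sub_eq q (by module)
        rw [heq] at htri
        have h7 := m.2.2.2.2
        have h8 : η * (m.1.1 + tt k) = η * tt k + η * m.1.1 := by ring
        linarith
    have hrmb : stmtRel p q s c η m.1 (m.1.1 + tt k, m.1.2.1 + tt k • aa k, zz k) := by
      refine ⟨?_, fun n => ?_, ?_⟩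
      · show m.1.1 ≤ m.1.1 + tt k
        linarith [htpos k]
      · show p n ((m.1.2.1 + tt k • aa k) - m.1.2.1) ≤ (m.1.1 + tt k - m.1.1) * s n
        have h2 : p n ((m.1.2.1 + tt k • aa k) - m.1.2.1) = |tt k| * p n (aa k) := by
          rw [add_sub_cancel_left, map_smul_eq_mul]; rfl
        rw [h2, abs_of_pos (htpos k)]
        have : m.1.1 + tt k - m.1.1 = tt k := by ring
        rw [this]
        exact mul_le_mul_of_nonneg_left (haP k n) (htpos k).le
      · show frechetRho q (zz k) (m.1.2.2 + (m.1.1 + tt k - m.1.1) • c) ≤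
          η * (m.1.1 + tt k - m.1.1)
        have : m.1.1 + tt k - m.1.1 = tt k := by ring
        rw [this]
        exact hzk.le
    have h9 : m.1.1 + tt k ≤ m.1.1 := (hm ⟨_, binv⟩ hrmb).1
    linarith [htpos k]
  -- conclusion
  have hPiS' : m.1.2.1 ∈ PiS p s := by
    intro n
    have := m.2.2.1 n
    rw [hmt1, one_mul] at this
    exact this
  refine ⟨m.1.2.2, ?_, ?_⟩
  · exact mem_biUnion hPiS' m.2.2.2.1
  · have h1 := m.2.2.2.2
    rw [hmt1, one_smul, mul_one] at h1
    linarith
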